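/- For relatively prime positive integers p and q with q/p ≤ 1, the word u_{q/p} in the free group F(a,b), defined by u_{q/p} = a·û·b^{(-1)^q}·û^{-1} with û = b^{ε₁}a^{ε₂}⋯b^{ε_{p-2}}a^{ε_{p-1}} when p is odd, and u_{q/p} = a·û·a^{-1}·û^{-1} with û = b^{ε₁}a^{ε₂}⋯a^{ε_{p-2}}b^{ε_{p-1}} when p is even, where ε_i = (-1)^{⌊iq/p⌋}, has word length exactly 2p. -/

import Mathlib

/-- A letter in the free group on two generators `a = 0`, `b = 1`:
the generator together with the exponent sign (`true` = exponent `+1`). -/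
abbrev Letter := Fin 2 × Bool

/-- A word in the generators `a±1, b±1`. -/
abbrev Word := List Letter

/-- Continued fraction `[m₁,…,m_k] = 1/(m₁ + 1/(m₂ + ⋯ + 1/m_k))`. -/
def cf : List ℕ → ℚ
  | [] => 0
  | m :: rest => 1 / (m + cf rest)

/-- `ε_i = (-1)^⌊iq/p⌋`. -/
def eps (p q i : ℕ) : ℤ := (-1) ^ (i * q / p)

/-- The word `û_{q/p} = b^{ε₁} a^{ε₂} b^{ε₃} ⋯` (of length `p-1`) as a list of letters. -/
def hatList (p q : ℕ) : Word :=
  (List.range (p - 1)).map (fun j =>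
    ((if (j + 1) % 2 = 1 then (1 : Fin 2) else 0), decide ((((j + 1) * q) / p) % 2 = 0)))

/-- The formal inverse of a word. -/
def invWord (w : Word) : Word := (w.map (fun x => (x.1, !x.2))).reverse

/-- The 2-bridge relator word `u_{q/p}`: `a·û·b^{(-1)^q}·û⁻¹` for `p` odd, and
`a·û·a⁻¹·û⁻¹` for `p` even. -/
def uList (p q : ℕ) : Word :=
  ((0 : Fin 2), true) :: (hatList p q ++
    (if p % 2 = 1 then [((1 : Fin 2), decide (q % 2 = 0))] else [((0 : Fin 2), false)]) ++
    invWord (hatList p q))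

/-- The relator word `u_r` of slope `r = q/p` (in lowest terms). -/
def slopeWord (r : ℚ) : Word := uList r.den r.num.toNat

/-- The slopes `r_0 = [4,3,3]`, `r_i = [4,2,(i-1)⟨3⟩,4,3]` for `i ≥ 1`. -/
def rSlope : ℕ → ℚ
  | 0 => cf [4, 3, 3]
  | i + 1 => cf ([4, 2] ++ List.replicate i 3 ++ [4, 3])

/-- Run-lengths of a list of signs (auxiliary). -/
def runsAux : Bool → ℕ → List Bool → List ℕ
  | _, n, [] => [n]
  | s, n, x :: xs => if x = s then runsAux s (n + 1) xs else n :: runsAux x 1 xs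

/-- The S-sequence of a word: the lengths of its maximal positive/negative blocks. -/
def Sseq (w : Word) : List ℕ :=
  match w.map Prod.snd with
  | [] => []
  | s :: xs => runsAux s 1 xs

/-- A word is reduced: no adjacent mutually inverse letters. -/
def Reduced (w : Word) : Prop :=
  List.Chain' (fun u v => ¬(u.1 = v.1 ∧ u.2 ≠ v.2)) w

/-- A word is alternating: adjacent letters use different generators. -/
def Alternating (w : Word) : Prop := List.Chain' (fun u v => u.1 ≠ v.1) w

/-- Cyclically reduced: reduced including the wrap-around pair. -/
def CyclicallyReduced (w : Word) : Prop :=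
  List.Chain' (fun u v => ¬(u.1 = v.1 ∧ u.2 ≠ v.2)) (w ++ w)

/-- Cyclically alternating: alternating including the wrap-around pair. -/
def CyclicallyAlternating (w : Word) : Prop :=
  List.Chain' (fun u v => u.1 ≠ v.1) (w ++ w)

/-- The word starts at a block boundary of the cyclic word: either all signs agree,
or the first and last signs differ. -/
def StartsAtBoundary (w : Word) : Prop :=
  (∀ x ∈ w, ∀ y ∈ w, x.2 = y.2) ∨ (∀ x ∈ w.head?, ∀ y ∈ w.getLast?, x.2 ≠ y.2)

/-- `L` is a linear representative of the cyclic S-sequence `CS(w)`: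
the S-sequence of some rotation of `w` starting at a block boundary. -/
def IsCSRep (w : Word) (L : List ℕ) : Prop :=
  ∃ n, StartsAtBoundary (w.rotate n) ∧ Sseq (w.rotate n) = L

/-- From a linear representative `L = (m+1, t₁⟨m⟩, m+1, t₂⟨m⟩, …)` of a CS-sequence,
extract the CT-sequence `(t₁, t₂, …)` of run-lengths of `m`'s. -/
def ctOf (m : ℕ) (L : List ℕ) : List ℕ := ((L.splitOn (m + 1)).drop 1).map List.length

/-- The cyclic sequence represented by `L` contains `pat` as a contiguous subsequence. -/
def CyclicContains (L pat : List ℕ) : Prop := ∃ k, pat.isPrefixOf (L.rotate k)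

/-- The number of (cyclic) occurrences of `pat` as a contiguous subsequence of
the cyclic sequence represented by `L`. -/
def cyclicCount (pat L : List ℕ) : ℕ :=
  ((List.range L.length).filter (fun k => pat.isPrefixOf (L.rotate k))).length

/-- `⟨⟨S₁, S₂, S₁, S₂⟩⟩` is the symmetric decomposition of the cyclic S-sequence of `w`
(for a slope whose continued fraction starts with `m`): each `Sᵢ` is a palindrome,
`S₁` begins and ends with `m+1`, and `S₂` begins and ends with `m`. -/
def IsSymmDecomp (w : Word) (m : ℕ) (S1 S2 : List ℕ) : Prop :=
  IsCSRep w (S1 ++ S2 ++ S1 ++ S2) ∧ S1.reverse = S1 ∧ S2.reverse = S2 ∧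
  (∀ x ∈ S1.head?, x = m + 1) ∧ (∀ x ∈ S1.getLast?, x = m + 1) ∧
  S2.head? = some m ∧ S2.getLast? = some m

/-- Expand a sequence of block lengths into the corresponding list of signs,
blocks alternating in sign starting with `s`. -/
def signList : Bool → List ℕ → List Bool
  | _, [] => []
  | s, n :: rest => List.replicate n s ++ signList (!s) rest

/-- The alternating word with initial generator `g0`, initial sign `s0`,
and S-sequence `S`. -/
def altWord (g0 : Fin 2) (s0 : Bool) (S : List ℕ) : Word :=
  (List.range (signList s0 S).length).zipWith (fun (k : ℕ) s => ((g0 + (Fin.ofNat 2 k : Fin 2)), s))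
    (signList s0 S)

/-- The product `w * w'` is freely reduced without cancellation at the junction. -/
def NoCancel (w w' : Word) : Prop :=
  ∀ x ∈ w.getLast?, ∀ y ∈ w'.head?, ¬(x.1 = y.1 ∧ x.2 ≠ y.2)

/-- The word `X`: alternating, starting with `a`, with S-sequence `(4,4,4,5,4,4)`
(it ends with `a⁻¹`). -/
def Xword : Word := altWord 0 true [4, 4, 4, 5, 4, 4]

/-- The endomorphism of `F(a,b)` with `a ↦ X⁻¹`, `b ↦ b⁻¹`. -/
def fmap : FreeGroup (Fin 2) →* FreeGroup (Fin 2) :=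
  FreeGroup.lift (fun i => if i = 0 then (FreeGroup.mk Xword)⁻¹ else (FreeGroup.of 1)⁻¹)

/-- The set of relators `{u_{r_i} : i ≥ 0}`. -/
def relsG : Set (FreeGroup (Fin 2)) := {x | ∃ i, x = FreeGroup.mk (slopeWord (rSlope i))}

/-- The symmetrized set generated by the relators `u_{r_i}`: all cyclic permutations
of the `u_{r_i}` and of their inverses. -/
def Rset : Set Word :=
  {w | ∃ i n, w = (slopeWord (rSlope i)).rotate n ∨
      w = (invWord (slopeWord (rSlope i))).rotate n}
lemma reduce_of_chain' : ∀ (w : Word),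
    List.Chain' (fun u v : Letter => ¬(u.1 = v.1 ∧ u.2 = !v.2)) w →
    FreeGroup.reduce w = w
  | [], _ => rfl
  | [_], _ => rfl
  | x :: y :: tl, h => by
    rw [FreeGroup.reduce.cons, reduce_of_chain' (y :: tl) (List.isChain_cons_cons.mp h).2]
    simp [(List.isChain_cons_cons.mp h).1]

lemma uList_map_fst_eq (p q : ℕ) :
    (uList p q).map Prod.fst =
      (0 : Fin 2) :: (((List.range (p-1)).map (fun j => if (j + 1) % 2 = 1 then (1 : Fin 2) else 0)
        ++ [if p % 2 = 1 then (1 : Fin 2) else 0])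
        ++ ((List.range (p-1)).map (fun j => if (j + 1) % 2 = 1 then (1 : Fin 2) else 0)).reverse) := by
  by_cases hpp : p % 2 = 1 <;>
    simp [uList, hatList, invWord, hpp, List.map_append, List.map_reverse, List.map_map,
      Function.comp_def]

lemma uList_length (p q : ℕ) (hp : 1 ≤ p) : (uList p q).length = 2 * p := by
  by_cases hpp : p % 2 = 1 <;> simp [uList, hatList, invWord, hpp] <;> omega

lemma uList_map_fst (p q : ℕ) (hp : 1 ≤ p) :
    ∀ i (h : i < ((uList p q).map Prod.fst).length),
      ((uList p q).map Prod.fst)[i] = (if i % 2 = 0 then (0 : Fin 2) else 1) := by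
  intro i h
  have h' : i < 2 * p := by simpa [uList_length p q hp] using h
  rw [List.getElem_of_eq (uList_map_fst_eq p q)]
  match i with
  | 0 => simp
  | (i+1) =>
    rw [List.getElem_cons_succ]
    by_cases h1 : i < p - 1
    · rw [List.getElem_append_left (by simp; omega), List.getElem_append_left (by simp; omega),
        List.getElem_map, List.getElem_range]
      by_cases hpar : (i+1) % 2 = 0
      · rw [if_pos hpar, if_neg (by omega)]
      · rw [if_neg hpar, if_pos (by omega)]
    · by_cases h2 : i = p - 1
      · rw [List.getElem_append_left (by simp; omega), List.getElem_append_right (by simp; omega),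
          List.getElem_singleton]
        subst h2
        by_cases hpar : p % 2 = 0
        · rw [if_neg (by omega), if_pos (by omega)]
        · rw [if_pos (by omega), if_neg (by omega)]
      · rw [List.getElem_append_right (by simp; omega), List.getElem_reverse,
          List.getElem_map, List.getElem_range]
        simp only [List.length_append, List.length_map, List.length_range, List.length_reverse,
          List.length_singleton]
        rw [show (p - 1) - 1 - (i - (p - 1 + 1)) = 2*(p-1) - i by omega]
        by_cases hpar : (i+1) % 2 = 0
        · rw [if_neg (by omega), if_pos hpar]
        · rw [if_pos (by omega), if_neg hpar]

/-- The relator word `u_{q/p}` is reduced of word length exactly `2p`. -/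
theorem uword_length (p q : ℕ) (hq : 0 < q) (hqp : q ≤ p) (hcop : Nat.Coprime p q) :
    (FreeGroup.mk (uList p q)).toWord.length = 2 * p := by
  have hp : 1 ≤ p := le_trans hq hqp
  have hchain : List.Chain' (fun u v : Letter => ¬(u.1 = v.1 ∧ u.2 = !v.2)) (uList p q) := by
    have halt : List.Chain' (fun u v : Fin 2 => u ≠ v) ((uList p q).map Prod.fst) := by
      unfold List.Chain'
      rw [List.isChain_iff_getElem]
      intro i hi
      rw [uList_map_fst p q hp, uList_map_fst p q hp]
      by_cases hpar : i % 2 = 0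
      · rw [if_pos hpar, if_neg (by omega)]; decide
      · rw [if_neg hpar, if_pos (by omega)]; decide
    have := (List.isChain_map (Prod.fst : Letter → Fin 2)).mp halt
    exact this.imp (fun {a b} h hc => h hc.1)
  rw [FreeGroup.toWord_mk, reduce_of_chain' _ hchain]
  exact uList_length p q hp
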